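/- With μ the uniform measure on S², ε = 0 and d ∈ (-1, 1), the experiment e⁰_{u,d} is classical: μ(eig({o₁ᵘ})) = P(o₁ᵘ, μ) = μ(pos({o₁ᵘ})) = (1-d)/2, and similarly all three quantities equal (1+d)/2 for outcome o₂ᵘ. -/

import Mathlib

open MeasureTheory Metric
open scoped RealInnerProductSpace

open Real Set Filter intervalIntegral
open scoped ENNReal Topology Pointwise

local notation "E3" => EuclideanSpace ℝ (Fin 3)

noncomputable def Gset (u : E3) (d : ℝ) : Set E3 := {x | ‖x‖ < 1 ∧ d * ‖x‖ < ⟪x, u⟫}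

noncomputable def GbarSet (u : E3) (d : ℝ) : Set E3 :=
  {x | 0 < ‖x‖ ∧ ‖x‖ < 1 ∧ d * ‖x‖ ≤ ⟪x, u⟫}


lemma euc_norm_sq {n : Type*} [Fintype n] (x : EuclideanSpace ℝ n) :
    ‖x‖ ^ 2 = ∑ i, x i ^ 2 := by
  rw [EuclideanSpace.norm_eq, Real.sq_sqrt (Finset.sum_nonneg fun i _ => sq_nonneg _)]
  simp [Real.norm_eq_abs, sq_abs]

lemma disc_vol (R : ℝ) :
    volume {y : Fin 2 → ℝ | ∑ j, y j ^ 2 < R} = ENNReal.ofReal (π * R) := by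
  rcases le_or_gt R 0 with hR | hR
  · have h1 : {y : Fin 2 → ℝ | ∑ j, y j ^ 2 < R} = ∅ := by
      ext y; simp only [Set.mem_setOf_eq, Set.mem_empty_iff_false, iff_false, not_lt]
      exact hR.trans (Finset.sum_nonneg fun i _ => sq_nonneg _)
    rw [h1, measure_empty, eq_comm, ENNReal.ofReal_eq_zero]
    exact mul_nonpos_of_nonneg_of_nonpos pi_nonneg hR
  · have hm : MeasurableSet {y : Fin 2 → ℝ | ∑ j, y j ^ 2 < R} :=
      measurableSet_lt (by fun_prop) measurable_const
    rw [← (EuclideanSpace.volume_preserving_symm_measurableEquiv_toLp (Fin 2)).measure_preimage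
      hm.nullMeasurableSet]
    have himg : (MeasurableEquiv.toLp 2 (Fin 2 → ℝ)).symm ⁻¹' {y : Fin 2 → ℝ | ∑ j, y j ^ 2 < R}
        = ball (0 : EuclideanSpace ℝ (Fin 2)) (Real.sqrt R) := by
      ext x
      simp only [Set.mem_preimage, Set.mem_setOf_eq, mem_ball, dist_zero_right]
      have hx : ∀ j, (MeasurableEquiv.toLp 2 (Fin 2 → ℝ)).symm x j = x j := fun j => rfl
      simp_rw [hx]
      rw [show (∑ j, x j ^ 2) = ‖x‖ ^ 2 from (euc_norm_sq x).symm]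
      exact (Real.lt_sqrt (norm_nonneg x)).symm
    rw [himg, EuclideanSpace.volume_ball]
    have hcard : Fintype.card (Fin 2) = 2 := Fintype.card_fin 2
    rw [hcard]
    have hG : Real.Gamma ((2 : ℕ) / 2 + 1) = 1 := by
      rw [show ((2:ℕ):ℝ)/2 + 1 = 2 by norm_num]
      exact Real.Gamma_two
    rw [hG]
    rw [← ENNReal.ofReal_pow (Real.sqrt_nonneg R), ← ENNReal.ofReal_mul (by positivity)]
    congr 1
    rw [Real.sq_sqrt hR.le, Real.sq_sqrt pi_nonneg]
    ring

lemma ball3_vol : volume (ball (0 : EuclideanSpace ℝ (Fin 3)) 1) = ENNReal.ofReal (4 * π / 3) := by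
  rw [EuclideanSpace.volume_ball, Fintype.card_fin]
  have hG : Real.Gamma ((3 : ℕ) / 2 + 1) = 3 / 4 * Real.sqrt π := by
    rw [show ((3:ℕ):ℝ)/2 + 1 = 3/2 + 1 by norm_num,
      Real.Gamma_add_one (by norm_num), show (3:ℝ)/2 = 1/2 + 1 by norm_num,
      Real.Gamma_add_one (by norm_num), Real.Gamma_one_half_eq]
    ring
  rw [hG, ENNReal.ofReal_one, one_pow, one_mul]
  congr 1
  have hs : Real.sqrt π ≠ 0 := by positivity
  have h3 : Real.sqrt π ^ 3 = π * Real.sqrt π := by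
    rw [pow_succ, Real.sq_sqrt pi_nonneg]
  rw [h3]
  field_simp

lemma cone_vol_pos {d : ℝ} (hd0 : 0 < d) (hd1 : d < 1) :
    (volume : Measure (Fin 3 → ℝ))
      {x | ∑ i, x i ^ 2 < 1 ∧ d * Real.sqrt (∑ i, x i ^ 2) < x 0}
      = ENNReal.ofReal (2 * π / 3 * (1 - d)) := by
  classical
  set SA : Set (ℝ × (Fin 2 → ℝ)) :=
    {p | 0 < p.1 ∧ p.1 < d ∧ d ^ 2 * (p.1 ^ 2 + ∑ j, p.2 j ^ 2) < p.1 ^ 2} with hSA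
  set SB : Set (ℝ × (Fin 2 → ℝ)) :=
    {p | d ≤ p.1 ∧ p.1 ^ 2 + ∑ j, p.2 j ^ 2 < 1} with hSB
  have hmA : MeasurableSet SA := by
    rw [hSA, Set.setOf_and, Set.setOf_and]
    exact (measurableSet_lt measurable_const measurable_fst).inter
      ((measurableSet_lt measurable_fst measurable_const).inter
        (measurableSet_lt (by fun_prop) (by fun_prop)))
  have hmB : MeasurableSet SB := by
    rw [hSB, Set.setOf_and]
    exact (measurableSet_le measurable_const measurable_fst).inter
      (measurableSet_lt (by fun_prop) measurable_const)
  -- the set is the preimage of SA ∪ SB under the succAbove equivalence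
  have key : {x : Fin 3 → ℝ | ∑ i, x i ^ 2 < 1 ∧ d * Real.sqrt (∑ i, x i ^ 2) < x 0}
      = (MeasurableEquiv.piFinSuccAbove (fun _ => ℝ) 0) ⁻¹' (SA ∪ SB) := by
    ext x
    have hsum : ∑ i, x i ^ 2 = x 0 ^ 2 + ∑ j, x ((0 : Fin 3).succAbove j) ^ 2 :=
      Fin.sum_univ_succAbove (fun i => x i ^ 2) 0
    have happ : (MeasurableEquiv.piFinSuccAbove (fun _ => ℝ) 0) x
        = (x 0, fun j => x ((0 : Fin 3).succAbove j)) := rfl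
    simp only [Set.mem_preimage, happ, Set.mem_union, hSA, hSB, Set.mem_setOf_eq]
    have hq0 : (0:ℝ) ≤ ∑ i, x i ^ 2 := Finset.sum_nonneg fun i _ => sq_nonneg _
    have hQ0 : (0:ℝ) ≤ ∑ j, x ((0 : Fin 3).succAbove j) ^ 2 :=
      Finset.sum_nonneg fun i _ => sq_nonneg _
    have hr : Real.sqrt (∑ i, x i ^ 2) ^ 2 = ∑ i, x i ^ 2 := Real.sq_sqrt hq0
    have hrn : 0 ≤ Real.sqrt (∑ i, x i ^ 2) := Real.sqrt_nonneg _
    constructor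
    · rintro ⟨h1, h2⟩
      have hx0 : 0 < x 0 := lt_of_le_of_lt (by positivity) h2
      rcases lt_or_ge (x 0) d with hcase | hcase
      · left
        refine ⟨hx0, hcase, ?_⟩
        have hmm : (d * Real.sqrt (∑ i, x i ^ 2)) * (d * Real.sqrt (∑ i, x i ^ 2))
            < x 0 * x 0 := mul_lt_mul'' h2 h2 (by positivity) (by positivity)
        nlinarith [hmm, hr, hsum]
      · right; exact ⟨hcase, by linarith [hsum, h1]⟩
    · rintro (⟨h1, h2, h3⟩ | ⟨h1, h2⟩)
      · have hq1 : (∑ i, x i ^ 2) < 1 := by nlinarith [hsum, mul_pos hd0 hd0]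
        refine ⟨hq1, ?_⟩
        nlinarith [hr, hrn, hsum, mul_pos h1 h1, mul_pos hd0 hd0]
      · have hq1 : (∑ i, x i ^ 2) < 1 := by linarith [hsum]
        refine ⟨hq1, ?_⟩
        have hrlt : Real.sqrt (∑ i, x i ^ 2) < 1 := by nlinarith [hr, hrn]
        nlinarith
  rw [key, (volume_preserving_piFinSuccAbove (fun _ : Fin 3 => ℝ) 0).measure_preimage
    (hmA.union hmB).nullMeasurableSet]
  rw [show (volume : Measure (ℝ × (Fin 2 → ℝ))) = (volume : Measure ℝ).prod volume from rfl,
    measure_union ?hdisj hmB]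
  case hdisj =>
    rw [Set.disjoint_left]
    rintro p ⟨_, h2, _⟩ ⟨h3, _⟩
    exact absurd (h2.trans_le h3) (lt_irrefl _)
  -- volume of SA
  have hvolA : ((volume : Measure ℝ).prod volume) SA = ENNReal.ofReal (π * ((1 - d^2) * d / 3)) := by
    rw [Measure.prod_apply hmA]
    have hslice : ∀ t : ℝ, (volume : Measure (Fin 2 → ℝ)) (Prod.mk t ⁻¹' SA)
        = (Set.Ioo (0:ℝ) d).indicator (fun t => ENNReal.ofReal (π * (t ^ 2 * (1 - d ^ 2) / d ^ 2))) t := by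
      intro t
      rcases em (t ∈ Set.Ioo (0:ℝ) d) with ht | ht
      · rw [Set.indicator_of_mem ht]
        have : Prod.mk t ⁻¹' SA = {y : Fin 2 → ℝ | ∑ j, y j ^ 2 < t ^ 2 * (1 - d ^ 2) / d ^ 2} := by
          ext y
          simp only [Set.mem_preimage, hSA, Set.mem_setOf_eq, ht.1, ht.2, true_and]
          rw [lt_div_iff₀ (by positivity)]
          constructor <;> intro h <;> nlinarith
        rw [this, disc_vol]
      · rw [Set.indicator_of_notMem ht]
        have : Prod.mk t ⁻¹' SA = ∅ := by
          ext y
          simp only [Set.mem_preimage, hSA, Set.mem_setOf_eq, Set.mem_empty_iff_false, iff_false]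
          rintro ⟨h1, h2, _⟩
          exact ht ⟨h1, h2⟩
        rw [this, measure_empty]
    simp_rw [hslice]
    rw [lintegral_indicator measurableSet_Ioo,
      Measure.restrict_congr_set Ioo_ae_eq_Ioc,
      ← MeasureTheory.ofReal_integral_eq_lintegral_ofReal]
    · rw [← intervalIntegral.integral_of_le hd0.le]
      have : ∫ t in (0:ℝ)..d, π * (t ^ 2 * (1 - d ^ 2) / d ^ 2)
          = (π * ((1 - d ^ 2) / d ^ 2)) * ∫ t in (0:ℝ)..d, t ^ 2 := by
        rw [← intervalIntegral.integral_const_mul]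
        congr 1; ext t; ring
      rw [this, integral_pow]
      congr 1
      push_cast
      field_simp
      ring
    · exact (Continuous.intervalIntegrable (by fun_prop) 0 d).1
    · filter_upwards [ae_restrict_mem measurableSet_Ioc] with t ht
      have h1 : (0:ℝ) ≤ t := le_of_lt ht.1
      have h2 : 0 ≤ t ^ 2 * (1 - d ^ 2) / d ^ 2 :=
        div_nonneg (mul_nonneg (sq_nonneg t) (by nlinarith)) (sq_nonneg d)
      exact mul_nonneg Real.pi_nonneg h2
  -- volume of SB
  have hvolB : ((volume : Measure ℝ).prod volume) SB = ENNReal.ofReal (π * (2/3 - d + d^3/3)) := by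
    rw [Measure.prod_apply hmB]
    have hslice : ∀ t : ℝ, (volume : Measure (Fin 2 → ℝ)) (Prod.mk t ⁻¹' SB)
        = (Set.Ico d 1).indicator (fun t => ENNReal.ofReal (π * (1 - t ^ 2))) t := by
      intro t
      rcases em (t ∈ Set.Ico d 1) with ht | ht
      · rw [Set.indicator_of_mem ht]
        have : Prod.mk t ⁻¹' SB = {y : Fin 2 → ℝ | ∑ j, y j ^ 2 < 1 - t ^ 2} := by
          ext y
          simp only [Set.mem_preimage, hSB, Set.mem_setOf_eq, ht.1, true_and]
          constructor <;> intro h <;> linarith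
        rw [this, disc_vol]
      · rw [Set.indicator_of_notMem ht]
        rcases lt_or_ge t d with h | h
        · have : Prod.mk t ⁻¹' SB = ∅ := by
            ext y
            simp only [Set.mem_preimage, hSB, Set.mem_setOf_eq, Set.mem_empty_iff_false, iff_false]
            rintro ⟨h1, _⟩
            exact absurd (h1.trans_lt h) (lt_irrefl _)
          rw [this, measure_empty]
        · have h1le : (1:ℝ) ≤ t := by
            by_contra hc
            exact ht ⟨h, lt_of_not_ge hc⟩
          have : Prod.mk t ⁻¹' SB = ∅ := by
            ext y
            simp only [Set.mem_preimage, hSB, Set.mem_setOf_eq, Set.mem_empty_iff_false, iff_false]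
            rintro ⟨_, h2⟩
            have h3 : (0:ℝ) ≤ ∑ j, y j ^ 2 := Finset.sum_nonneg fun i _ => sq_nonneg _
            nlinarith
          rw [this, measure_empty]
    simp_rw [hslice]
    rw [lintegral_indicator measurableSet_Ico,
      Measure.restrict_congr_set Ico_ae_eq_Ioc,
      ← MeasureTheory.ofReal_integral_eq_lintegral_ofReal]
    · rw [← intervalIntegral.integral_of_le hd1.le]
      have : ∫ t in d..(1:ℝ), π * (1 - t ^ 2)
          = π * ((∫ t in d..(1:ℝ), (1:ℝ)) - ∫ t in d..(1:ℝ), t ^ 2) := by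
        rw [← intervalIntegral.integral_sub (intervalIntegrable_const) (intervalIntegrable_pow 2),
          ← intervalIntegral.integral_const_mul]
      rw [this, integral_pow, intervalIntegral.integral_const]
      congr 1
      push_cast
      simp only [smul_eq_mul, mul_one]
      ring
    · exact (Continuous.intervalIntegrable (by fun_prop) d 1).1
    · filter_upwards [ae_restrict_mem measurableSet_Ioc] with t ht
      have h1 : t ≤ 1 := ht.2
      have h0 : 0 < t := hd0.trans ht.1
      exact mul_nonneg Real.pi_nonneg (by nlinarith)
  have hnn : (0:ℝ) ≤ 2 / 3 - d + d ^ 3 / 3 := by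
    nlinarith [mul_nonneg (sq_nonneg (1-d)) (show (0:ℝ) ≤ d+2 by linarith)]
  rw [hvolA, hvolB, ← ENNReal.ofReal_add
    (mul_nonneg Real.pi_nonneg (by nlinarith)) (mul_nonneg Real.pi_nonneg hnn)]
  congr 1
  ring

lemma pi_cone_measurable (d : ℝ) :
    MeasurableSet {x : Fin 3 → ℝ | ∑ i, x i ^ 2 < 1 ∧ d * Real.sqrt (∑ i, x i ^ 2) < x 0} := by
  rw [Set.setOf_and]
  exact (measurableSet_lt (by fun_prop) measurable_const).inter
    (measurableSet_lt (Measurable.const_mul (by fun_prop) d) (measurable_pi_apply 0))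

lemma euc_cone_vol_pos (u : E3) (hu : ‖u‖ = 1) {d : ℝ} (hd0 : 0 < d) (hd1 : d < 1) :
    volume (Gset u d) = ENNReal.ofReal (2 * π / 3 * (1 - d)) := by
  show volume {x : E3 | ‖x‖ < 1 ∧ d * ‖x‖ < ⟪x, u⟫} = ENNReal.ofReal (2 * π / 3 * (1 - d))
  -- find an orthonormal basis whose 0th vector is u
  have hortho : Orthonormal ℝ (({0} : Set (Fin 3)).restrict (fun _ => u)) := by
    constructor
    · intro i; exact hu
    · intro i j hij
      exact absurd (Subtype.ext (i.2.trans j.2.symm)) hij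
  obtain ⟨b, hb⟩ := hortho.exists_orthonormalBasis_extension_of_card_eq
    (by simp [finrank_euclideanSpace_fin])
  have hb0 : b 0 = u := hb 0 rfl
  -- rotate
  have hrot : {x : E3 | ‖x‖ < 1 ∧ d * ‖x‖ < ⟪x, u⟫}
      = b.repr ⁻¹' {y : E3 | ‖y‖ < 1 ∧ d * ‖y‖ < y 0} := by
    ext x
    simp only [Set.mem_preimage, Set.mem_setOf_eq, LinearIsometryEquiv.norm_map]
    have : (b.repr x) 0 = ⟪x, u⟫ := by
      rw [b.repr_apply_apply, hb0, real_inner_comm]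
    rw [this]
  rw [hrot, b.measurePreserving_repr.measure_preimage]
  swap
  · exact (by
      rw [Set.setOf_and]
      exact ((measurableSet_lt (by fun_prop) measurable_const).inter
        (measurableSet_lt (by fun_prop) (by fun_prop))).nullMeasurableSet)
  -- transfer to the pi space
  have htrans : {y : E3 | ‖y‖ < 1 ∧ d * ‖y‖ < y 0}
      = (MeasurableEquiv.toLp 2 (Fin 3 → ℝ)).symm ⁻¹'
          {x : Fin 3 → ℝ | ∑ i, x i ^ 2 < 1 ∧ d * Real.sqrt (∑ i, x i ^ 2) < x 0} := by
    ext y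
    have happ : ∀ i, (MeasurableEquiv.toLp 2 (Fin 3 → ℝ)).symm y i = y i := fun _ => rfl
    have hn : ‖y‖ = Real.sqrt (∑ i, y i ^ 2) := by
      rw [EuclideanSpace.norm_eq]
      congr 1
      exact Finset.sum_congr rfl fun i _ => by rw [Real.norm_eq_abs, sq_abs]
    simp only [Set.mem_preimage, Set.mem_setOf_eq, happ]
    rw [hn]
    have hq0 : (0:ℝ) ≤ ∑ i, y i ^ 2 := Finset.sum_nonneg fun i _ => sq_nonneg _
    constructor
    · rintro ⟨h1, h2⟩
      refine ⟨?_, h2⟩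
      have := Real.sq_sqrt hq0
      nlinarith [Real.sqrt_nonneg (∑ i, y i ^ 2)]
    · rintro ⟨h1, h2⟩
      refine ⟨?_, h2⟩
      rw [show (1:ℝ) = Real.sqrt 1 by rw [Real.sqrt_one]]
      exact Real.sqrt_lt_sqrt hq0 h1
  rw [htrans, (EuclideanSpace.volume_preserving_symm_measurableEquiv_toLp (Fin 3)).measure_preimage
    (pi_cone_measurable d).nullMeasurableSet]
  exact cone_vol_pos hd0 hd1

lemma Gset_meas (u : E3) (d : ℝ) : MeasurableSet (Gset u d) := by
  unfold Gset
  rw [Set.setOf_and]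
  exact (measurableSet_lt (by fun_prop) measurable_const).inter
    (measurableSet_lt (by fun_prop) ((continuous_id.inner continuous_const).measurable))

lemma GbarSet_meas (u : E3) (d : ℝ) : MeasurableSet (GbarSet u d) := by
  unfold GbarSet
  rw [Set.setOf_and, Set.setOf_and]
  exact (measurableSet_lt measurable_const (by fun_prop)).inter
    ((measurableSet_lt (by fun_prop) measurable_const).inter
      (measurableSet_le (by fun_prop) ((continuous_id.inner continuous_const).measurable)))

lemma Gset_ne_zero {u : E3} {d : ℝ} {x : E3} (hx : x ∈ Gset u d) : 0 < ‖x‖ := by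
  rcases hx with ⟨_, h2⟩
  rcases eq_or_ne x 0 with rfl | hne
  · simp at h2
  · exact norm_pos_iff.2 hne

lemma Gset_anti {u : E3} {d d' : ℝ} (h : d' ≤ d) : Gset u d ⊆ Gset u d' := by
  rintro x ⟨h1, h2⟩
  exact ⟨h1, lt_of_le_of_lt (mul_le_mul_of_nonneg_right h (norm_nonneg x)) h2⟩

lemma ballStar_vol : volume {x : E3 | 0 < ‖x‖ ∧ ‖x‖ < 1} = ENNReal.ofReal (4 * π / 3) := by
  have h : {x : E3 | 0 < ‖x‖ ∧ ‖x‖ < 1} = ball (0 : E3) 1 \ {0} := by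
    ext x
    simp only [Set.mem_setOf_eq, Set.mem_diff, mem_ball_zero_iff, Set.mem_singleton_iff,
      norm_pos_iff]
    tauto
  rw [h, measure_diff_null (measure_singleton 0), ball3_vol]

-- Ḡ for d ∈ (0,1) via decreasing intersection
lemma euc_conebar_vol_pos (u : E3) (hu : ‖u‖ = 1) {d : ℝ} (hd0 : 0 < d) (hd1 : d < 1) :
    volume (GbarSet u d) = ENNReal.ofReal (2 * π / 3 * (1 - d)) := by
  set a : ℕ → ℝ := fun n => d - d / (n + 2) with ha
  have ha_lt : ∀ n, a n < d := fun n => by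
    have : 0 < d / (n + 2) := by positivity
    simp [ha]; linarith
  have ha_pos : ∀ n, 0 < a n := fun n => by
    have h2 : d / (n + 2) < d := by
      rw [div_lt_iff₀ (by positivity)]
      nlinarith [Nat.cast_nonneg (α := ℝ) n]
    simp only [ha]; linarith
  have ha_mono : Monotone a := by
    intro m n hmn
    simp only [ha]
    have : d / (n + 2) ≤ d / (m + 2) := by
      apply div_le_div_of_nonneg_left hd0.le (by positivity)
      exact_mod_cast by exact_mod_cast add_le_add_left (Nat.cast_le.2 hmn) 2
    linarith
  have ha_tend : Tendsto a atTop (𝓝 d) := by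
    have h1 : Tendsto (fun n : ℕ => d / (n + 2)) atTop (𝓝 0) := by
      apply Tendsto.div_atTop tendsto_const_nhds
      exact tendsto_atTop_add_const_right _ 2 tendsto_natCast_atTop_atTop
    have := Tendsto.sub (tendsto_const_nhds (x := d) (f := atTop (α := ℕ))) h1
    simpa using this
  have hInter : ⋂ n, Gset u (a n) = GbarSet u d := by
    ext x
    simp only [Set.mem_iInter, Gset, GbarSet, Set.mem_setOf_eq]
    constructor
    · intro h
      have h0 := Gset_ne_zero (u := u) (d := a 0) ⟨(h 0).1, (h 0).2⟩
      refine ⟨h0, (h 0).1, ?_⟩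
      have : Tendsto (fun n => a n * ‖x‖) atTop (𝓝 (d * ‖x‖)) :=
        ha_tend.mul_const _
      exact le_of_tendsto this (Eventually.of_forall fun n => (h n).2.le)
    · rintro ⟨h0, h1, h2⟩ n
      refine ⟨h1, ?_⟩
      calc a n * ‖x‖ < d * ‖x‖ := by
            exact mul_lt_mul_of_pos_right (ha_lt n) h0
        _ ≤ ⟪x, u⟫ := h2
  have hvols : ∀ n, volume (Gset u (a n)) = ENNReal.ofReal (2 * π / 3 * (1 - a n)) :=
    fun n => euc_cone_vol_pos u hu (ha_pos n) ((ha_lt n).trans hd1)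
  have htend1 : Tendsto (fun n => volume (Gset u (a n))) atTop
      (𝓝 (volume (⋂ n, Gset u (a n)))) := by
    apply tendsto_measure_iInter_atTop (fun n => (Gset_meas u (a n)).nullMeasurableSet)
    · intro m n hmn
      exact Gset_anti (ha_mono hmn)
    · exact ⟨0, by rw [hvols 0]; exact ENNReal.ofReal_ne_top⟩
  have htend2 : Tendsto (fun n => volume (Gset u (a n))) atTop
      (𝓝 (ENNReal.ofReal (2 * π / 3 * (1 - d)))) := by
    simp_rw [hvols]
    apply ENNReal.tendsto_ofReal
    exact Tendsto.const_mul _ ((tendsto_const_nhds.sub ha_tend))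
  rw [← hInter]
  exact tendsto_nhds_unique htend1 htend2

-- G at d = 0 via increasing union
lemma euc_cone_vol_zero (u : E3) (hu : ‖u‖ = 1) :
    volume (Gset u 0) = ENNReal.ofReal (2 * π / 3) := by
  set a : ℕ → ℝ := fun n => 1 / (n + 2) with ha
  have ha_pos : ∀ n, 0 < a n := fun n => by positivity
  have ha_lt1 : ∀ n, a n < 1 := fun n => by
    rw [ha]
    rw [div_lt_one (by positivity)]
    nlinarith [Nat.cast_nonneg (α := ℝ) n]
  have ha_anti : ∀ m n, m ≤ n → a n ≤ a m := by
    intro m n hmn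
    apply div_le_div_of_nonneg_left zero_le_one (by positivity)
    exact_mod_cast add_le_add_left (Nat.cast_le.2 hmn) 2
  have ha_tend : Tendsto a atTop (𝓝 0) := by
    apply Tendsto.div_atTop tendsto_const_nhds
    exact tendsto_atTop_add_const_right _ 2 tendsto_natCast_atTop_atTop
  have hUnion : ⋃ n, Gset u (a n) = Gset u 0 := by
    ext x
    simp only [Set.mem_iUnion, Gset, Set.mem_setOf_eq, zero_mul]
    constructor
    · rintro ⟨n, h1, h2⟩
      exact ⟨h1, lt_of_le_of_lt (by positivity) h2⟩
    · rintro ⟨h1, h2⟩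
      obtain ⟨n, hn⟩ := exists_nat_one_div_lt h2
      refine ⟨n, h1, ?_⟩
      calc a n * ‖x‖ ≤ a n * 1 := by
            exact mul_le_mul_of_nonneg_left h1.le (ha_pos n).le
        _ = 1 / (n + 2) := by rw [ha]; ring
        _ ≤ 1 / (n + 1) := by
            apply div_le_div_of_nonneg_left zero_le_one (by positivity)
            linarith
        _ < ⟪x, u⟫ := hn
  have hvols : ∀ n, volume (Gset u (a n)) = ENNReal.ofReal (2 * π / 3 * (1 - a n)) :=
    fun n => euc_cone_vol_pos u hu (ha_pos n) (ha_lt1 n)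
  have hmono : Monotone (fun n => Gset u (a n)) := fun m n hmn => Gset_anti (ha_anti m n hmn)
  have htend1 : Tendsto (fun n => volume (Gset u (a n))) atTop
      (𝓝 (volume (⋃ n, Gset u (a n)))) := tendsto_measure_iUnion_atTop hmono
  have htend2 : Tendsto (fun n => volume (Gset u (a n))) atTop
      (𝓝 (ENNReal.ofReal (2 * π / 3))) := by
    simp_rw [hvols]
    apply ENNReal.tendsto_ofReal
    have := Tendsto.const_mul (2 * π / 3) ((tendsto_const_nhds (x := (1:ℝ))).sub ha_tend)
    simpa using this
  rw [← hUnion]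
  exact tendsto_nhds_unique htend1 htend2

-- Ḡ at d = 0 via null hyperplane
lemma euc_conebar_vol_zero (u : E3) (hu : ‖u‖ = 1) :
    volume (GbarSet u 0) = ENNReal.ofReal (2 * π / 3) := by
  have hZ : volume {x : E3 | ⟪x, u⟫ = 0} = 0 := by
    have h1 : {x : E3 | ⟪x, u⟫ = 0} = ((ℝ ∙ u)ᗮ : Submodule ℝ E3) := by
      ext x
      simp only [Set.mem_setOf_eq, SetLike.mem_coe,
        Submodule.mem_orthogonal_singleton_iff_inner_right]
      rw [real_inner_comm]
    rw [h1]
    apply Measure.addHaar_submodule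
    intro htop
    have : u ∈ ((ℝ ∙ u)ᗮ : Submodule ℝ E3) := htop ▸ Submodule.mem_top
    have h2 := Submodule.mem_orthogonal_singleton_iff_inner_right.1 this
    rw [real_inner_self_eq_norm_sq, hu] at h2
    norm_num at h2
  have hsub1 : Gset u 0 ⊆ GbarSet u 0 := by
    rintro x ⟨h1, h2⟩
    exact ⟨Gset_ne_zero ⟨h1, h2⟩, h1, h2.le⟩
  have hsub2 : GbarSet u 0 ⊆ Gset u 0 ∪ {x : E3 | ⟪x, u⟫ = 0} := by
    rintro x ⟨h0, h1, h2⟩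
    rw [zero_mul] at h2
    rcases eq_or_lt_of_le h2 with heq | hlt
    · exact Or.inr heq.symm
    · exact Or.inl ⟨h1, by rw [zero_mul]; exact hlt⟩
  refine le_antisymm ?_ ?_
  · calc volume (GbarSet u 0) ≤ volume (Gset u 0 ∪ {x : E3 | ⟪x, u⟫ = 0}) := measure_mono hsub2
      _ ≤ volume (Gset u 0) + volume {x : E3 | ⟪x, u⟫ = 0} := measure_union_le _ _
      _ = ENNReal.ofReal (2 * π / 3) := by rw [hZ, euc_cone_vol_zero u hu, add_zero]
  · rw [← euc_cone_vol_zero u hu]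
    exact measure_mono hsub1

lemma neg_measure_preimage (S : Set E3) (hS : NullMeasurableSet S (volume : Measure E3)) :
    volume ((fun x : E3 => -x) ⁻¹' S) = volume S := by
  have h := (LinearIsometryEquiv.neg ℝ (E := E3)).measurePreserving
  exact h.measure_preimage hS

lemma euc_cone_vol (u : E3) (hu : ‖u‖ = 1) {d : ℝ} (hd : d ∈ Set.Ioo (-1 : ℝ) 1) :
    volume (Gset u d) = ENNReal.ofReal (2 * π / 3 * (1 - d)) ∧
    volume (GbarSet u d) = ENNReal.ofReal (2 * π / 3 * (1 - d)) := by
  obtain ⟨hdm, hdp⟩ := hd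
  rcases lt_trichotomy d 0 with hneg | rfl | hpos
  · -- d < 0 : use complement and negation
    have hmd0 : 0 < -d := by linarith
    have hmd1 : -d < 1 := by linarith
    constructor
    · -- G d = ballStar \ N⁻¹' Ḡ(-d)
      have hid : Gset u d = {x : E3 | 0 < ‖x‖ ∧ ‖x‖ < 1} \ ((fun x : E3 => -x) ⁻¹' GbarSet u (-d)) := by
        ext x
        simp only [Gset, GbarSet, Set.mem_diff, Set.mem_preimage, Set.mem_setOf_eq,
          norm_neg, inner_neg_left]
        constructor
        · rintro ⟨h1, h2⟩
          have h0 : 0 < ‖x‖ := Gset_ne_zero (u := u) (d := d) ⟨h1, h2⟩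
          exact ⟨⟨h0, h1⟩, fun ⟨_, _, h3⟩ => by linarith⟩
        · rintro ⟨⟨h0, h1⟩, h2⟩
          refine ⟨h1, ?_⟩
          by_contra hc
          push_neg at hc
          exact h2 ⟨h0, h1, by linarith⟩
      rw [hid, measure_diff, neg_measure_preimage _ (GbarSet_meas u (-d)).nullMeasurableSet,
        ballStar_vol, euc_conebar_vol_pos u hu hmd0 hmd1,
        ← ENNReal.ofReal_sub _ (by nlinarith [Real.pi_nonneg])]
      · congr 1; ring
      · rintro x hx
        have h2 := hx
        simp only [Set.mem_preimage, GbarSet, Set.mem_setOf_eq, norm_neg] at h2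
        exact ⟨h2.1, h2.2.1⟩
      · exact ((GbarSet_meas u (-d)).preimage (measurable_neg)).nullMeasurableSet
      · rw [neg_measure_preimage _ (GbarSet_meas u (-d)).nullMeasurableSet,
          euc_conebar_vol_pos u hu hmd0 hmd1]
        exact ENNReal.ofReal_ne_top
    · have hid : GbarSet u d = {x : E3 | 0 < ‖x‖ ∧ ‖x‖ < 1} \ ((fun x : E3 => -x) ⁻¹' Gset u (-d)) := by
        ext x
        simp only [Gset, GbarSet, Set.mem_diff, Set.mem_preimage, Set.mem_setOf_eq,
          norm_neg, inner_neg_left]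
        constructor
        · rintro ⟨h0, h1, h2⟩
          exact ⟨⟨h0, h1⟩, fun ⟨_, h3⟩ => by linarith⟩
        · rintro ⟨⟨h0, h1⟩, h2⟩
          refine ⟨h0, h1, ?_⟩
          by_contra hc
          push_neg at hc
          exact h2 ⟨h1, by linarith⟩
      rw [hid, measure_diff, neg_measure_preimage _ (Gset_meas u (-d)).nullMeasurableSet,
        ballStar_vol, euc_cone_vol_pos u hu hmd0 hmd1,
        ← ENNReal.ofReal_sub _ (by nlinarith [Real.pi_nonneg])]
      · congr 1; ring
      · rintro x hx
        simp only [Set.mem_preimage, Gset, Set.mem_setOf_eq, norm_neg] at hx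
        have h0 : 0 < ‖x‖ := by
          rcases eq_or_ne x 0 with rfl | hne
          · simpa using hx.2
          · exact norm_pos_iff.2 hne
        exact ⟨h0, hx.1⟩
      · exact ((Gset_meas u (-d)).preimage (measurable_neg)).nullMeasurableSet
      · rw [neg_measure_preimage _ (Gset_meas u (-d)).nullMeasurableSet,
          euc_cone_vol_pos u hu hmd0 hmd1]
        exact ENNReal.ofReal_ne_top
  · constructor
    · rw [euc_cone_vol_zero u hu]; norm_num
    · rw [euc_conebar_vol_zero u hu]; norm_num
  · exact ⟨euc_cone_vol_pos u hu hpos hdp, euc_conebar_vol_pos u hu hpos hdp⟩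

/-- the uniform (normalized surface area) probability measure on the unit sphere in ℝ³ -/
noncomputable def sphereUniform :
    Measure (sphere (0 : EuclideanSpace ℝ (Fin 3)) 1) :=
  ((volume : Measure (EuclideanSpace ℝ (Fin 3))).toSphere Set.univ)⁻¹ •
    (volume : Measure (EuclideanSpace ℝ (Fin 3))).toSphere

lemma smul_image_lt (u : E3) (d : ℝ) :
    (Set.Ioo (0:ℝ) 1) • ((↑) '' {v : sphere (0:E3) 1 | d < ⟪(v : E3), u⟫}) = Gset u d := by
  ext x
  simp only [Set.mem_smul, Set.mem_image, Set.mem_setOf_eq, Set.mem_Ioo, Gset]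
  constructor
  · rintro ⟨r, ⟨hr0, hr1⟩, y, ⟨v, hv, rfl⟩, rfl⟩
    have hvn : ‖(v : E3)‖ = 1 := by
      have h := v.2
      rwa [mem_sphere_zero_iff_norm] at h
    constructor
    · rw [norm_smul, hvn, Real.norm_eq_abs, abs_of_pos hr0, mul_one]
      exact hr1
    · rw [norm_smul, hvn, Real.norm_eq_abs, abs_of_pos hr0, mul_one, real_inner_smul_left]
      calc d * r = r * d := by ring
        _ < r * ⟪(v : E3), u⟫ := mul_lt_mul_of_pos_left hv hr0
  · rintro ⟨h1, h2⟩
    have h0 : 0 < ‖x‖ := Gset_ne_zero ⟨h1, h2⟩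
    have hsph : ‖x‖⁻¹ • x ∈ sphere (0:E3) 1 := by
      rw [mem_sphere_zero_iff_norm, norm_smul, Real.norm_eq_abs, abs_of_pos (by positivity),
        inv_mul_cancel₀ h0.ne']
    refine ⟨‖x‖, ⟨h0, h1⟩, ‖x‖⁻¹ • x, ⟨⟨‖x‖⁻¹ • x, hsph⟩, ?_, rfl⟩, ?_⟩
    · show d < ⟪‖x‖⁻¹ • x, u⟫
      rw [real_inner_smul_left, inv_mul_eq_div, lt_div_iff₀ h0]
      exact h2
    · rw [smul_smul, mul_inv_cancel₀ h0.ne', one_smul]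

lemma smul_image_le (u : E3) (d : ℝ) :
    (Set.Ioo (0:ℝ) 1) • ((↑) '' {v : sphere (0:E3) 1 | d ≤ ⟪(v : E3), u⟫}) = GbarSet u d := by
  ext x
  simp only [Set.mem_smul, Set.mem_image, Set.mem_setOf_eq, Set.mem_Ioo, GbarSet]
  constructor
  · rintro ⟨r, ⟨hr0, hr1⟩, y, ⟨v, hv, rfl⟩, rfl⟩
    have hvn : ‖(v : E3)‖ = 1 := by
      have h := v.2
      rwa [mem_sphere_zero_iff_norm] at h
    have hnx : ‖r • (v : E3)‖ = r := by
      rw [norm_smul, hvn, Real.norm_eq_abs, abs_of_pos hr0, mul_one]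
    refine ⟨by rw [hnx]; exact hr0, by rw [hnx]; exact hr1, ?_⟩
    rw [hnx, real_inner_smul_left]
    calc d * r = r * d := by ring
      _ ≤ r * ⟪(v : E3), u⟫ := mul_le_mul_of_nonneg_left hv hr0.le
  · rintro ⟨h0, h1, h2⟩
    have hsph : ‖x‖⁻¹ • x ∈ sphere (0:E3) 1 := by
      rw [mem_sphere_zero_iff_norm, norm_smul, Real.norm_eq_abs, abs_of_pos (by positivity),
        inv_mul_cancel₀ h0.ne']
    refine ⟨‖x‖, ⟨h0, h1⟩, ‖x‖⁻¹ • x, ⟨⟨‖x‖⁻¹ • x, hsph⟩, ?_, rfl⟩, ?_⟩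
    · show d ≤ ⟪‖x‖⁻¹ • x, u⟫
      rw [real_inner_smul_left, inv_mul_eq_div, le_div_iff₀ h0]
      exact h2
    · rw [smul_smul, mul_inv_cancel₀ h0.ne', one_smul]

lemma toSphere_univ_val :
    (volume : Measure E3).toSphere Set.univ = ENNReal.ofReal (4 * π) := by
  rw [Measure.toSphere_apply_univ, ball3_vol, finrank_euclideanSpace_fin]
  rw [show ((3:ℕ) : ℝ≥0∞) = ENNReal.ofReal 3 by simp, ← ENNReal.ofReal_mul (by norm_num)]
  congr 1
  ring

lemma cap_arith {c : ℝ} (hc : 0 ≤ c) :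
    (ENNReal.ofReal (4 * π))⁻¹ * (((3:ℕ) : ℝ≥0∞) * ENNReal.ofReal (2 * π / 3 * c))
      = ENNReal.ofReal (c / 2) := by
  have h1 : ((3:ℕ) : ℝ≥0∞) * ENNReal.ofReal (2 * π / 3 * c) = ENNReal.ofReal (2 * π * c) := by
    rw [show ((3:ℕ) : ℝ≥0∞) = ENNReal.ofReal 3 by simp, ← ENNReal.ofReal_mul (by norm_num)]
    congr 1
    ring
  have h2 : ENNReal.ofReal (2 * π * c) = ENNReal.ofReal (4 * π) * ENNReal.ofReal (c / 2) := by
    rw [← ENNReal.ofReal_mul (by positivity)]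
    congr 1
    ring
  rw [h1, h2, ← mul_assoc, ENNReal.inv_mul_cancel, one_mul]
  · exact ne_of_gt (ENNReal.ofReal_pos.2 (by positivity))
  · exact ENNReal.ofReal_ne_top

lemma capOpen (u : E3) (hu : ‖u‖ = 1) {d : ℝ} (hd : d ∈ Set.Ioo (-1 : ℝ) 1) :
    sphereUniform {v : sphere (0:E3) 1 | d < ⟪(v : E3), u⟫} = ENNReal.ofReal ((1 - d) / 2) := by
  have hmeas : MeasurableSet {v : sphere (0:E3) 1 | d < ⟪(v : E3), u⟫} :=
    measurableSet_lt measurable_const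
      ((continuous_subtype_val.inner continuous_const).measurable)
  rw [sphereUniform, Measure.smul_apply, smul_eq_mul, toSphere_univ_val,
    Measure.toSphere_apply' _ hmeas, smul_image_lt, (euc_cone_vol u hu hd).1,
    finrank_euclideanSpace_fin]
  exact cap_arith (by linarith [hd.2])

lemma capClosed (u : E3) (hu : ‖u‖ = 1) {d : ℝ} (hd : d ∈ Set.Ioo (-1 : ℝ) 1) :
    sphereUniform {v : sphere (0:E3) 1 | d ≤ ⟪(v : E3), u⟫} = ENNReal.ofReal ((1 - d) / 2) := by
  have hmeas : MeasurableSet {v : sphere (0:E3) 1 | d ≤ ⟪(v : E3), u⟫} :=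
    measurableSet_le measurable_const
      ((continuous_subtype_val.inner continuous_const).measurable)
  rw [sphereUniform, Measure.smul_apply, smul_eq_mul, toSphere_univ_val,
    Measure.toSphere_apply' _ hmeas, smul_image_le, (euc_cone_vol u hu hd).2,
    finrank_euclideanSpace_fin]
  exact cap_arith (by linarith [hd.2])

theorem stmt_8 (u : EuclideanSpace ℝ (Fin 3)) (hu : ‖u‖ = 1)
    (d : ℝ) (hd : d ∈ Set.Ioo (-1 : ℝ) 1) :
    -- outcome o₁ᵘ : eigenstate set, overall probability, possibility set all equal (1-d)/2
    sphereUniform {v | d < ⟪(v : EuclideanSpace ℝ (Fin 3)), u⟫} = ENNReal.ofReal ((1 - d) / 2) ∧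
    (∫ v, (if d < ⟪(v : EuclideanSpace ℝ (Fin 3)), u⟫ then (1 : ℝ) else 0) ∂sphereUniform)
      = (1 - d) / 2 ∧
    sphereUniform {v | d ≤ ⟪(v : EuclideanSpace ℝ (Fin 3)), u⟫} = ENNReal.ofReal ((1 - d) / 2) ∧
    -- outcome o₂ᵘ : eigenstate set, overall probability, possibility set all equal (1+d)/2
    sphereUniform {v | ⟪(v : EuclideanSpace ℝ (Fin 3)), u⟫ < d} = ENNReal.ofReal ((1 + d) / 2) ∧
    (∫ v, (if ⟪(v : EuclideanSpace ℝ (Fin 3)), u⟫ < d then (1 : ℝ) else 0) ∂sphereUniform)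
      = (1 + d) / 2 ∧
    sphereUniform {v | ⟪(v : EuclideanSpace ℝ (Fin 3)), u⟫ ≤ d} = ENNReal.ofReal ((1 + d) / 2)
    := by
  have hu' : ‖-u‖ = 1 := by rwa [norm_neg]
  have hd' : -d ∈ Set.Ioo (-1 : ℝ) 1 := ⟨by linarith [hd.2], by linarith [hd.1]⟩
  have hset1 : {v : sphere (0:E3) 1 | ⟪(v : E3), u⟫ < d}
      = {v : sphere (0:E3) 1 | -d < ⟪(v : E3), -u⟫} := by
    ext v
    simp only [Set.mem_setOf_eq, inner_neg_right, neg_lt_neg_iff]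
  have hset2 : {v : sphere (0:E3) 1 | ⟪(v : E3), u⟫ ≤ d}
      = {v : sphere (0:E3) 1 | -d ≤ ⟪(v : E3), -u⟫} := by
    ext v
    simp only [Set.mem_setOf_eq, inner_neg_right, neg_le_neg_iff]
  have h4 : sphereUniform {v : sphere (0:E3) 1 | ⟪(v : E3), u⟫ < d}
      = ENNReal.ofReal ((1 + d) / 2) := by
    rw [hset1, capOpen (-u) hu' hd', show (1 - -d) = 1 + d by ring]
  have h6 : sphereUniform {v : sphere (0:E3) 1 | ⟪(v : E3), u⟫ ≤ d}
      = ENNReal.ofReal ((1 + d) / 2) := by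
    rw [hset2, capClosed (-u) hu' hd', show (1 - -d) = 1 + d by ring]
  have h1 := capOpen u hu hd
  have hint1 : (∫ v, (if d < ⟪(v : E3), u⟫ then (1 : ℝ) else 0) ∂sphereUniform)
      = (1 - d) / 2 := by
    have hmeas : MeasurableSet {v : sphere (0:E3) 1 | d < ⟪(v : E3), u⟫} :=
      measurableSet_lt measurable_const
        ((continuous_subtype_val.inner continuous_const).measurable)
    have heq : (fun v : sphere (0:E3) 1 => if d < ⟪(v : E3), u⟫ then (1 : ℝ) else 0)
        = fun v => Set.indicator {v : sphere (0:E3) 1 | d < ⟪(v : E3), u⟫} 1 v := by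
      funext v
      rw [Set.indicator_apply]
      simp [Set.mem_setOf_eq]
    rw [heq, integral_indicator_one hmeas, measureReal_def, h1, ENNReal.toReal_ofReal (by linarith [hd.2])]
  have hint2 : (∫ v, (if ⟪(v : E3), u⟫ < d then (1 : ℝ) else 0) ∂sphereUniform)
      = (1 + d) / 2 := by
    have hmeas : MeasurableSet {v : sphere (0:E3) 1 | ⟪(v : E3), u⟫ < d} :=
      measurableSet_lt ((continuous_subtype_val.inner continuous_const).measurable)
        measurable_const
    have heq : (fun v : sphere (0:E3) 1 => if ⟪(v : E3), u⟫ < d then (1 : ℝ) else 0)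
        = fun v => Set.indicator {v : sphere (0:E3) 1 | ⟪(v : E3), u⟫ < d} 1 v := by
      funext v
      rw [Set.indicator_apply]
      simp [Set.mem_setOf_eq]
    rw [heq, integral_indicator_one hmeas, measureReal_def, h4, ENNReal.toReal_ofReal (by linarith [hd.1])]
  exact ⟨h1, hint1, capClosed u hu hd, h4, hint2, h6⟩
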